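/- Let f : ℝ → ℝ be continuously differentiable with 1-Lipschitz derivative f', let ε > 0, and let x_- < x_+ be real numbers with f'(x_-) ≤ -ε and 0 ≤ f(x_-) - f(x_+) ≤ (ε/4)·(x_+ - x_-). Then there exists x ∈ [x_-, x_+] such that |f'(x)| ≤ ε/2. -/

import Mathlib

theorem binary_search_ii_stationary (f : ℝ → ℝ) (hf : ContDiff ℝ 1 f)
    (hlip : LipschitzWith 1 (deriv f)) (ε : ℝ) (hε : 0 < ε)
    (xm xp : ℝ) (hx : xm < xp) (h₀ : deriv f xm ≤ -ε)
    (h₁ : 0 ≤ f xm - f xp) (h₂ : f xm - f xp ≤ (ε / 4) * (xp - xm)) :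
    ∃ x ∈ Set.Icc xm xp, |deriv f x| ≤ ε / 2 := by
  have hdiff : Differentiable ℝ f := hf.differentiable one_ne_zero
  obtain ⟨c, hc, hslope⟩ := exists_deriv_eq_slope f hx hdiff.continuous.continuousOn
    (hdiff.differentiableOn)
  have hcmem : c ∈ Set.Icc xm xp := ⟨hc.1.le, hc.2.le⟩
  have hpos : 0 < xp - xm := by linarith [hx]
  have hslope' : -(ε/4) ≤ deriv f c := by
    rw [hslope, le_div_iff₀ hpos]
    nlinarith
  have hcont : ContinuousOn (deriv f) (Set.Icc xm c) :=
    hlip.continuous.continuousOn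
  have hmem : (-(ε/2)) ∈ Set.Icc (deriv f xm) (deriv f c) := by
    constructor <;> linarith
  obtain ⟨y, hy, hyval⟩ := intermediate_value_Icc hc.1.le hcont hmem
  refine ⟨y, ⟨hy.1, hy.2.trans hc.2.le⟩, ?_⟩
  rw [hyval, abs_neg, abs_of_pos (by linarith)]
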